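/- arXiv:2111.09382 — 6 statements merged into one kernel-verified Lean document; each statement's English description precedes it below -/
import Mathlib

section
/- Suppose D ⊆ ℝⁿ with 0 ∈ D, V : D → ℝ is continuously differentiable, and S ⊆ D is a compact invariant set of the ODE whose interior contains the origin, such that ∇V(x)ᵀ f(x) ≤ 0 for all x ∈ S. Define E := {x ∈ S : ∇V(x)ᵀ f(x) = 0}. Suppose further that V(0) = 0, V(x) > 0 for all x ∈ D \ {0}, and the only point x ∈ S satisfying φ(x,t) ∈ E for all t ≥ 0 is x = 0. Then the origin is asymptotically stable: for each ε > 0 there exists δ > 0 such that ‖φ(x,t)‖₂ < ε for all x with ‖x‖₂ < δ and all t ≥ 0, and there exists δ₀ > 0 such that lim_{t→∞} ‖φ(x,t)‖₂ = 0 for all x with ‖x‖₂ < δ₀. -/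
open Filter Metric Set
open scoped Topology

/-- The derivative of `V` along the vector field `f` at `x`, i.e. `∇V(x)ᵀ f(x)`. -/
noncomputable def lieDeriv {n : ℕ} (V : EuclideanSpace ℝ (Fin n) → ℝ)
    (f : EuclideanSpace ℝ (Fin n) → EuclideanSpace ℝ (Fin n))
    (x : EuclideanSpace ℝ (Fin n)) : ℝ :=
  inner ℝ (gradient V x) (f x)

/-- LaSalle: if additionally `V(0) = 0`, `V > 0` on `D \ {0}`, the origin lies in the
interior of `S`, and the only complete trajectory inside `E` is the origin, then the origin
is asymptotically stable. -/
theorem lasalle_asymptotic_stability {n : ℕ}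
    (f : EuclideanSpace ℝ (Fin n) → EuclideanSpace ℝ (Fin n))
    (hf : ContDiff ℝ 1 f) (hf0 : f 0 = 0)
    (φ : EuclideanSpace ℝ (Fin n) → ℝ → EuclideanSpace ℝ (Fin n))
    (hφ0 : ∀ x, φ x 0 = x)
    (hφC : ContDiffOn ℝ 1 (fun p : EuclideanSpace ℝ (Fin n) × ℝ => φ p.1 p.2)
      (Set.univ ×ˢ Set.Ici (0 : ℝ)))
    (hφd : ∀ x t, 0 ≤ t → HasDerivWithinAt (φ x) (f (φ x t)) (Set.Ici 0) t)
    (hsemi : ∀ x t s, 0 ≤ t → 0 ≤ s → φ (φ x t) s = φ x (t + s))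
    (D S : Set (EuclideanSpace ℝ (Fin n)))
    (V : EuclideanSpace ℝ (Fin n) → ℝ)
    (hV : ContDiffOn ℝ 1 V D)
    (h0D : (0 : EuclideanSpace ℝ (Fin n)) ∈ D)
    (hSD : S ⊆ D) (hScomp : IsCompact S)
    (h0S : (0 : EuclideanSpace ℝ (Fin n)) ∈ interior S)
    (hSinv : ∀ x ∈ S, ∀ t, 0 ≤ t → φ x t ∈ S)
    (hdec : ∀ x ∈ S, lieDeriv V f x ≤ 0)
    (hV0 : V 0 = 0)
    (hVpos : ∀ x ∈ D \ {0}, 0 < V x)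
    (hE : ∀ x ∈ S, (∀ t, 0 ≤ t → φ x t ∈ {y ∈ S | lieDeriv V f y = 0}) ↔ x = 0) :
    (∀ ε > 0, ∃ δ > 0, ∀ x : EuclideanSpace ℝ (Fin n), ‖x‖ < δ →
        ∀ t, 0 ≤ t → ‖φ x t‖ < ε) ∧
    (∃ δ₀ > 0, ∀ x : EuclideanSpace ℝ (Fin n), ‖x‖ < δ₀ →
        Tendsto (fun t => ‖φ x t‖) atTop (𝓝 0)) := by
  -- trivial case `n = 0`
  rcases Nat.eq_zero_or_pos n with hn | hn
  · subst hn
    have hz : ∀ y : EuclideanSpace ℝ (Fin 0), y = 0 := fun y => Subsingleton.elim y 0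
    constructor
    · intro ε hε
      refine ⟨1, one_pos, fun x _ t _ => ?_⟩
      rw [hz (φ x t), norm_zero]; exact hε
    · refine ⟨1, one_pos, fun x _ => ?_⟩
      have : (fun t => ‖φ x t‖) = fun _ => (0 : ℝ) := funext fun t => by
        rw [hz (φ x t), norm_zero]
      rw [this]; exact tendsto_const_nhds
  haveI : Nontrivial (EuclideanSpace ℝ (Fin n)) := by
    have h1 : (EuclideanSpace.single (⟨0, hn⟩ : Fin n) (1 : ℝ)) ≠ 0 := by
      intro h
      have := congrArg (fun y => ‖y‖) h
      simp [EuclideanSpace.norm_single] at this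
    exact ⟨⟨_, 0, h1⟩⟩
  -- basic continuity facts
  have htrajC : ∀ x, ContinuousOn (φ x) (Ici (0:ℝ)) :=
    fun x t ht => (hφd x t ht).continuousWithinAt
  have hflowC : ∀ s : ℝ, 0 ≤ s → Continuous fun y => φ y s := by
    intro s hs
    rw [← continuousOn_univ]
    have hg : ContinuousOn (fun y : EuclideanSpace ℝ (Fin n) => ((y, s) : _ × ℝ)) univ :=
      (continuous_id.prodMk continuous_const).continuousOn
    have hmaps : MapsTo (fun y : EuclideanSpace ℝ (Fin n) => ((y, s) : _ × ℝ))
        univ (univ ×ˢ Ici 0) := fun z _ => by simp [hs]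
    exact hφC.continuousOn.comp hg hmaps
  have hVc : ContinuousOn V D := hV.continuousOn
  have hVnn : ∀ y ∈ D, 0 ≤ V y := by
    intro y hy
    by_cases h : y = 0
    · simp [h, hV0]
    · exact (hVpos y ⟨hy, h⟩).le
  obtain ⟨r, hr, hball⟩ := Metric.isOpen_iff.1 isOpen_interior 0 h0S
  -- the chain rule along trajectories, at points of `interior S`
  have hchain : ∀ x t, 0 ≤ t → φ x t ∈ interior S →
      HasDerivWithinAt (fun τ => V (φ x τ)) (lieDeriv V f (φ x t)) (Ici 0) t := by
    intro x t ht hmem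
    have hyD : D ∈ 𝓝 (φ x t) :=
      mem_nhds_iff.2 ⟨interior S, interior_subset.trans hSD, isOpen_interior, hmem⟩
    have hVd : DifferentiableAt ℝ V (φ x t) :=
      ((hV.differentiableOn one_ne_zero) (φ x t) (hSD (interior_subset hmem))).differentiableAt hyD
    have h1 : HasDerivWithinAt (fun τ => V (φ x τ))
        (fderiv ℝ V (φ x t) (f (φ x t))) (Ici 0) t :=
      hVd.hasFDerivAt.comp_hasDerivWithinAt t (hφd x t ht)
    have h2 : fderiv ℝ V (φ x t) (f (φ x t)) = lieDeriv V f (φ x t) := by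
      simp only [lieDeriv, gradient, InnerProductSpace.toDual_symm_apply]
    rwa [h2] at h1
  -- monotonicity of `V` along trajectories staying in `interior S`
  have hmonoIcc : ∀ x ∈ S, ∀ b : ℝ, (∀ s ∈ Icc (0:ℝ) b, φ x s ∈ interior S) →
      AntitoneOn (fun τ => V (φ x τ)) (Icc 0 b) := by
    intro x hxS b hin
    refine antitoneOn_of_hasDerivWithinAt_nonpos (convex_Icc 0 b)
      (f' := fun τ => lieDeriv V f (φ x τ)) ?_ ?_ ?_
    · exact hVc.comp ((htrajC x).mono (fun s hs => hs.1))
        (fun s hs => hSD (hSinv x hxS s hs.1))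
    · intro s hs
      rw [interior_Icc] at hs ⊢
      exact ((hchain x s hs.1.le (hin s ⟨hs.1.le, hs.2.le⟩)).mono
        (fun u hu => hu.1.le))
    · intro s hs
      rw [interior_Icc] at hs
      exact hdec _ (interior_subset (hin s ⟨hs.1.le, hs.2.le⟩))
  have hmonoIci : ∀ x ∈ S, (∀ s, 0 ≤ s → φ x s ∈ interior S) →
      AntitoneOn (fun τ => V (φ x τ)) (Ici 0) := by
    intro x hxS hin
    refine antitoneOn_of_hasDerivWithinAt_nonpos (convex_Ici 0)
      (f' := fun τ => lieDeriv V f (φ x τ)) ?_ ?_ ?_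
    · exact hVc.comp (htrajC x) (fun s hs => hSD (hSinv x hxS s hs))
    · intro s hs
      rw [interior_Ici] at hs ⊢
      exact (hchain x s hs.le (hin s hs.le)).mono (fun u hu => mem_Ici.2 (le_of_lt hu))
    · intro s hs
      rw [interior_Ici] at hs
      exact hdec _ (interior_subset (hin s hs.le))
  -- trajectories starting in a sublevel set inside a closed ball stay in the ball
  have hstay : ∀ ε' : ℝ, 0 < ε' → closedBall (0:EuclideanSpace ℝ (Fin n)) ε' ⊆ interior S →
      ∀ m : ℝ, (∀ y ∈ sphere (0:EuclideanSpace ℝ (Fin n)) ε', m ≤ V y) →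
      ∀ x : EuclideanSpace ℝ (Fin n), ‖x‖ ≤ ε' → V x < m →
      ∀ t, 0 ≤ t → φ x t ∈ closedBall (0:EuclideanSpace ℝ (Fin n)) ε' := by
    intro ε' hε' hsub m hm x hx hVx
    by_contra hcon
    push_neg at hcon
    obtain ⟨t₁, ht₁, hout⟩ := hcon
    have hxball : x ∈ closedBall (0:EuclideanSpace ℝ (Fin n)) ε' := by
      rwa [mem_closedBall, dist_zero_right]
    have hxS : x ∈ S := interior_subset (hsub hxball)
    set B := {t : ℝ | 0 ≤ t ∧ ε' < ‖φ x t‖} with hB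
    have hBne : B.Nonempty := by
      refine ⟨t₁, ht₁, ?_⟩
      rw [mem_closedBall, dist_zero_right, not_le] at hout
      exact hout
    have hBbd : BddBelow B := ⟨0, fun t ht => ht.1⟩
    set t₀ := sInf B with ht₀
    have ht₀0 : 0 ≤ t₀ := le_csInf hBne fun t ht => ht.1
    have hle : ∀ s, 0 ≤ s → s < t₀ → ‖φ x s‖ ≤ ε' := by
      intro s hs hst
      by_contra h
      push_neg at h
      exact absurd (csInf_le hBbd ⟨hs, h⟩) (not_le.2 hst)
    have hnormC : ContinuousOn (fun s => ‖φ x s‖) (Ici (0:ℝ)) :=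
      continuous_norm.comp_continuousOn (htrajC x)
    -- ‖φ x t₀‖ ≥ ε'
    have hge : ε' ≤ ‖φ x t₀‖ := by
      have hcl : t₀ ∈ closure B := csInf_mem_closure hBne hBbd
      haveI : (𝓝[B] t₀).NeBot := mem_closure_iff_nhdsWithin_neBot.1 hcl
      have htend : Tendsto (fun s => ‖φ x s‖) (𝓝[B] t₀) (𝓝 ‖φ x t₀‖) :=
        ((hnormC t₀ ht₀0).mono (fun s hs => hs.1)).tendsto
      exact ge_of_tendsto htend
        (eventually_nhdsWithin_of_forall (fun s hs => hs.2.le))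
    -- ‖φ x t₀‖ ≤ ε'
    have hlt : ‖φ x t₀‖ ≤ ε' := by
      rcases eq_or_lt_of_le ht₀0 with h0 | h0
      · have ht0 : t₀ = 0 := h0.symm
        rw [ht0, hφ0]; exact hx
      · have hcl : t₀ ∈ closure (Ico (0:ℝ) t₀) := by
          rw [closure_Ico (ne_of_lt h0)]
          exact ⟨ht₀0, le_rfl⟩
        haveI : (𝓝[Ico (0:ℝ) t₀] t₀).NeBot := mem_closure_iff_nhdsWithin_neBot.1 hcl
        have htend : Tendsto (fun s => ‖φ x s‖) (𝓝[Ico (0:ℝ) t₀] t₀) (𝓝 ‖φ x t₀‖) :=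
          ((hnormC t₀ ht₀0).mono (fun s hs => hs.1)).tendsto
        exact le_of_tendsto htend
          (eventually_nhdsWithin_of_forall (fun s hs => hle s hs.1 hs.2))
    have heq : ‖φ x t₀‖ = ε' := le_antisymm hlt hge
    have hin : ∀ s ∈ Icc (0:ℝ) t₀, φ x s ∈ interior S := by
      intro s hs
      rcases eq_or_lt_of_le hs.2 with h | h
      · apply hsub; rw [mem_closedBall, dist_zero_right, h, heq]
      · apply hsub; rw [mem_closedBall, dist_zero_right]; exact hle s hs.1 h
    have hanti := hmonoIcc x hxS t₀ hin
    have hVt₀ : V (φ x t₀) ≤ V x := by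
      have := hanti (Set.left_mem_Icc.2 ht₀0) ⟨ht₀0, le_rfl⟩ ht₀0
      simpa only [hφ0] using this
    have : m ≤ V (φ x t₀) := hm _ (by rwa [mem_sphere, dist_zero_right])
    linarith
  -- setup: for each ε > 0, produce δ, ε', m
  have hsetup : ∀ ε : ℝ, 0 < ε → ∃ δ : ℝ, 0 < δ ∧ ∃ ε' : ℝ, 0 < ε' ∧ ε' < ε ∧ δ ≤ ε' ∧
      closedBall (0:EuclideanSpace ℝ (Fin n)) ε' ⊆ interior S ∧ ∃ m : ℝ, 0 < m ∧
      (∀ y ∈ sphere (0:EuclideanSpace ℝ (Fin n)) ε', m ≤ V y) ∧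
      (∀ x : EuclideanSpace ℝ (Fin n), ‖x‖ < δ → V x < m) := by
    intro ε hε
    set ε' := min (r/2) (ε/2) with hε'def
    have hε' : 0 < ε' := lt_min (by linarith) (by linarith)
    have hε'ε : ε' < ε := lt_of_le_of_lt (min_le_right _ _) (by linarith)
    have hsub : closedBall (0:EuclideanSpace ℝ (Fin n)) ε' ⊆ interior S := by
      refine (closedBall_subset_ball ?_).trans hball
      exact lt_of_le_of_lt (min_le_left _ _) (by linarith)
    have hsubD : sphere (0:EuclideanSpace ℝ (Fin n)) ε' ⊆ D := by
      intro y hy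
      exact hSD (interior_subset (hsub (sphere_subset_closedBall hy)))
    have hne : (sphere (0:EuclideanSpace ℝ (Fin n)) ε').Nonempty :=
      NormedSpace.sphere_nonempty.2 hε'.le
    obtain ⟨z, hz, hzmin⟩ := (isCompact_sphere (0:EuclideanSpace ℝ (Fin n)) ε').exists_isMinOn
      hne (hVc.mono hsubD)
    set m := V z with hm
    have hz0 : z ≠ 0 := by
      intro h
      rw [mem_sphere, dist_zero_right, h, norm_zero] at hz
      exact absurd hz (ne_of_lt hε')
    have hmpos : 0 < m := hVpos z ⟨hsubD hz, hz0⟩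
    -- continuity of V at 0
    have hD0 : D ∈ 𝓝 (0:EuclideanSpace ℝ (Fin n)) :=
      mem_nhds_iff.2 ⟨interior S, interior_subset.trans hSD, isOpen_interior, h0S⟩
    have hVat0 : ContinuousAt V 0 := (hVc 0 h0D).continuousAt hD0
    have hpre : {y : EuclideanSpace ℝ (Fin n) | V y < m} ∈ 𝓝 (0:EuclideanSpace ℝ (Fin n)) := by
      have : Iio m ∈ 𝓝 (V 0) := Iio_mem_nhds (by rw [hV0]; exact hmpos)
      exact hVat0.preimage_mem_nhds this
    obtain ⟨δ₁, hδ₁, hδball⟩ := Metric.mem_nhds_iff.1 hpre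
    refine ⟨min δ₁ ε', lt_min hδ₁ hε', ε', hε', hε'ε, min_le_right _ _, hsub, m, hmpos,
      fun y hy => hzmin hy, fun x hx => ?_⟩
    have : x ∈ ball (0:EuclideanSpace ℝ (Fin n)) δ₁ := by
      rw [mem_ball, dist_zero_right]
      exact lt_of_lt_of_le hx (min_le_left _ _)
    exact hδball this
  -- Part 1: stability
  have part1 : ∀ ε > 0, ∃ δ > 0, ∀ x : EuclideanSpace ℝ (Fin n), ‖x‖ < δ →
      ∀ t, 0 ≤ t → ‖φ x t‖ < ε := by
    intro ε hε
    obtain ⟨δ, hδ, ε', hε', hε'ε, hδε', hsub, m, hmpos, hmmin, hVlt⟩ := hsetup ε hε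
    refine ⟨δ, hδ, fun x hx t ht => ?_⟩
    have := hstay ε' hε' hsub m hmmin x (le_trans hx.le hδε') (hVlt x hx) t ht
    rw [mem_closedBall, dist_zero_right] at this
    exact lt_of_le_of_lt this hε'ε
  refine ⟨part1, ?_⟩
  -- Part 2: attractivity
  obtain ⟨δ, hδ, ε', hε', hε'r, hδε', hsub, m, hmpos, hmmin, hVlt⟩ := hsetup r hr
  refine ⟨δ, hδ, fun x hx => ?_⟩
  have hxball : x ∈ closedBall (0:EuclideanSpace ℝ (Fin n)) ε' := by
    rw [mem_closedBall, dist_zero_right]; exact le_trans hx.le hδε'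
  have hxS : x ∈ S := interior_subset (hsub hxball)
  have hstayx : ∀ t, 0 ≤ t → φ x t ∈ closedBall (0:EuclideanSpace ℝ (Fin n)) ε' :=
    hstay ε' hε' hsub m hmmin x (le_trans hx.le hδε') (hVlt x hx)
  have hanti : AntitoneOn (fun τ => V (φ x τ)) (Ici 0) :=
    hmonoIci x hxS (fun s hs => hsub (hstayx s hs))
  -- the limit `c` of `V` along the trajectory
  set W : ℝ → ℝ := fun t => V (φ x (max t 0)) with hW
  have hWanti : Antitone W := by
    intro a b hab
    exact hanti (le_max_right a 0) (le_max_right b 0) (max_le_max hab le_rfl)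
  have hWnn : ∀ t, 0 ≤ W t := fun t =>
    hVnn _ (hSD (hSinv x hxS _ (le_max_right t 0)))
  have hWbdd : BddBelow (Set.range W) := ⟨0, fun y ⟨t, ht⟩ => ht ▸ hWnn t⟩
  set c := ⨅ t, W t with hc
  have hWc : Tendsto W atTop (𝓝 c) := tendsto_atTop_ciInf hWanti hWbdd
  have hVtend : Tendsto (fun t => V (φ x t)) atTop (𝓝 c) := by
    refine hWc.congr' ?_
    filter_upwards [eventually_ge_atTop (0:ℝ)] with t ht
    rw [hW]; simp [max_eq_left ht]
  have hc0 : 0 ≤ c := le_ciInf hWnn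
  have hcx : c ≤ V x := by
    have := ciInf_le hWbdd 0
    simpa only [hW, max_self, hφ0] using this
  have hcm : c < m := lt_of_le_of_lt hcx (hVlt x hx)
  -- extract a limit point `p` of the trajectory
  obtain ⟨p, hpball, ψ, hψ, hψtend⟩ :=
    (isCompact_closedBall (0:EuclideanSpace ℝ (Fin n)) ε').tendsto_subseq
      (x := fun j : ℕ => φ x (j : ℝ)) (fun j => hstayx _ (Nat.cast_nonneg j))
  have hpS : p ∈ S := hScomp.isClosed.mem_of_tendsto hψtend
    (Eventually.of_forall fun j => hSinv x hxS _ (Nat.cast_nonneg _))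
  have hψat : Tendsto (fun j => ((ψ j : ℕ) : ℝ)) atTop atTop :=
    tendsto_natCast_atTop_atTop.comp hψ.tendsto_atTop
  -- V is constantly c along the trajectory of p
  have hVp : ∀ s, 0 ≤ s → V (φ p s) = c := by
    intro s hs
    have h1 : Tendsto (fun j => φ x ((ψ j : ℝ) + s)) atTop (𝓝 (φ p s)) := by
      have := ((hflowC s hs).tendsto p).comp hψtend
      refine this.congr fun j => ?_
      exact hsemi x (ψ j : ℝ) s (Nat.cast_nonneg _) hs
    have h2 : Tendsto (fun j => V (φ x ((ψ j : ℝ) + s))) atTop (𝓝 c) :=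
      hVtend.comp (tendsto_atTop_add_const_right atTop s hψat)
    have h3 : Tendsto (fun j => V (φ x ((ψ j : ℝ) + s))) atTop (𝓝 (V (φ p s))) := by
      have hmem : ∀ j : ℕ, φ x ((ψ j : ℝ) + s) ∈ D := fun j =>
        hSD (hSinv x hxS _ (add_nonneg (Nat.cast_nonneg _) hs))
      have hwithin : Tendsto (fun j => φ x ((ψ j : ℝ) + s)) atTop (𝓝[D] (φ p s)) :=
        tendsto_nhdsWithin_iff.2 ⟨h1, Eventually.of_forall hmem⟩
      exact ((hVc _ (hSD (hSinv p hpS s hs))).tendsto).comp hwithin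
    exact tendsto_nhds_unique h3 h2
  -- the trajectory of p stays in the closed ball
  have htrajp : ∀ s, 0 ≤ s → φ p s ∈ closedBall (0:EuclideanSpace ℝ (Fin n)) ε' := by
    intro s hs
    by_contra hout
    rw [mem_closedBall, dist_zero_right, not_le] at hout
    have hp0 : ‖φ p 0‖ ≤ ε' := by
      rw [hφ0]; rwa [mem_closedBall, dist_zero_right] at hpball
    have hcont : ContinuousOn (fun τ => ‖φ p τ‖) (Icc 0 s) :=
      (continuous_norm.comp_continuousOn (htrajC p)).mono (fun u hu => hu.1)
    have hIVT := intermediate_value_Icc hs hcont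
    have : ε' ∈ Icc (‖φ p 0‖) (‖φ p s‖) := ⟨hp0, hout.le⟩
    obtain ⟨s₁, hs₁, hns₁⟩ := hIVT this
    have : m ≤ V (φ p s₁) := hmmin _ (by rwa [mem_sphere, dist_zero_right])
    rw [hVp s₁ hs₁.1] at this
    linarith
  -- the trajectory of p lies in E, so p = 0 and c = 0
  have hpE : ∀ t, 0 ≤ t → φ p t ∈ {y ∈ S | lieDeriv V f y = 0} := by
    intro s hs
    refine ⟨hSinv p hpS s hs, ?_⟩
    have hd1 : HasDerivWithinAt (fun τ => V (φ p τ)) (lieDeriv V f (φ p s)) (Ici 0) s :=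
      hchain p s hs (hsub (htrajp s hs))
    have hd2 : HasDerivWithinAt (fun τ => V (φ p τ)) 0 (Ici 0) s := by
      refine (hasDerivWithinAt_const s (Ici (0:ℝ)) c).congr ?_ (hVp s hs)
      intro u hu
      exact hVp u hu
    exact UniqueDiffWithinAt.eq_deriv _ (uniqueDiffOn_Ici 0 s hs) hd1 hd2
  have hp0 : p = 0 := (hE p hpS).1 hpE
  have hceq : c = 0 := by
    have := hVp 0 le_rfl
    rw [hφ0, hp0, hV0] at this
    exact this.symm
  -- conclude: the trajectory tends to 0
  rw [hceq] at hVtend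
  by_contra hnot
  rw [Metric.tendsto_atTop] at hnot
  push_neg at hnot
  obtain ⟨ε₀, hε₀, hfreq⟩ := hnot
  choose t htge htfar using hfreq
  have htnn : ∀ T : ℕ, (0:ℝ) ≤ t (T:ℝ) := fun T => le_trans (Nat.cast_nonneg T) (htge _)
  obtain ⟨q, hqball, ψ', hψ', hψtend'⟩ :=
    (isCompact_closedBall (0:EuclideanSpace ℝ (Fin n)) ε').tendsto_subseq
      (x := fun j : ℕ => φ x (t (j:ℝ))) (fun j => hstayx _ (htnn j))
  have hqS : q ∈ S := hScomp.isClosed.mem_of_tendsto hψtend'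
    (Eventually.of_forall fun j => hSinv x hxS _ (htnn _))
  have htat : Tendsto (fun j : ℕ => t ((ψ' j : ℕ) : ℝ)) atTop atTop := by
    refine tendsto_atTop_mono (fun j => htge ((ψ' j : ℕ) : ℝ)) ?_
    exact tendsto_natCast_atTop_atTop.comp hψ'.tendsto_atTop
  have hVq : V q = 0 := by
    have h2 : Tendsto (fun j : ℕ => V (φ x (t ((ψ' j : ℕ) : ℝ)))) atTop (𝓝 0) :=
      hVtend.comp htat
    have h3 : Tendsto (fun j : ℕ => V (φ x (t ((ψ' j : ℕ) : ℝ)))) atTop (𝓝 (V q)) := by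
      have hwithin : Tendsto (fun j : ℕ => φ x (t ((ψ' j : ℕ) : ℝ))) atTop (𝓝[D] q) :=
        tendsto_nhdsWithin_iff.2 ⟨hψtend',
          Eventually.of_forall fun j => hSD (hSinv x hxS _ (htnn _))⟩
      exact ((hVc _ (hSD hqS)).tendsto).comp hwithin
    exact tendsto_nhds_unique h3 h2
  have hqnorm : ε₀ ≤ ‖q‖ := by
    have hnormtend : Tendsto (fun j : ℕ => ‖φ x (t ((ψ' j : ℕ) : ℝ))‖) atTop (𝓝 ‖q‖) :=
      (continuous_norm.tendsto q).comp hψtend'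
    refine ge_of_tendsto hnormtend (Eventually.of_forall fun j => ?_)
    have := htfar ((ψ' j : ℕ) : ℝ)
    rwa [Real.dist_eq, sub_zero, abs_of_nonneg (norm_nonneg _)] at this
  have hq0 : q ≠ 0 := by
    intro h
    rw [h, norm_zero] at hqnorm
    linarith
  have := hVpos q ⟨hSD hqS, hq0⟩
  linarith
end

section
/- Let γ₁ ∈ ℝ, let ρ : ℝ → ℝ be defined by ρ(x) = exp(−1/(γ₁ − x)²) for x > γ₁ and ρ(x) = 0 for x ≤ γ₁, let D ⊆ ℝⁿ, let f : ℝⁿ → ℝⁿ, and let V : ℝⁿ → ℝ be continuously differentiable. Suppose that ∇V(x)ᵀ f(x) < 0 for every x ∈ D with V(x) > γ₁. Setting Ṽ := ρ ∘ V, it holds that {x ∈ D : ∇Ṽ(x)ᵀ f(x) = 0} = {x ∈ D : V(x) ≤ γ₁}. -/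
open Real Asymptotics Filter

lemma rho_deriv_pos (γ₁ : ℝ) (ρ : ℝ → ℝ)
    (hρ : ρ = fun s : ℝ => if γ₁ < s then Real.exp (-1 / (γ₁ - s) ^ 2) else 0)
    {s : ℝ} (hs : γ₁ < s) : ∃ d > 0, HasDerivAt ρ d s := by
  have hne : γ₁ - s ≠ 0 := by intro h; linarith [sub_eq_zero.mp h]
  have hne2 : (γ₁ - s) ^ 2 ≠ 0 := pow_ne_zero _ hne
  have hid : HasDerivAt (fun t : ℝ => γ₁ - t) (-1) s := (hasDerivAt_id s).const_sub γ₁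
  have hsq : HasDerivAt (fun t : ℝ => (γ₁ - t) ^ 2) (↑2 * (γ₁ - s) ^ 1 * (-1)) s := hid.pow 2
  have hinv := (hsq.inv hne2).neg
  have hexp := hinv.exp
  have heq : ρ =ᶠ[nhds s] fun t => Real.exp (-((γ₁ - t) ^ 2)⁻¹) := by
    filter_upwards [eventually_gt_nhds hs] with t ht
    rw [hρ]; simp [ht, neg_div, one_div]
  refine ⟨_, ?_, hexp.congr_of_eventuallyEq heq⟩
  apply mul_pos (Real.exp_pos _)
  have h1 : (0:ℝ) < ((γ₁ - s) ^ 2) ^ 2 := by positivity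
  rw [show -(-(↑2 * (γ₁ - s) ^ 1 * -1) / ((γ₁ - s) ^ 2) ^ 2)
      = 2 * (s - γ₁) / ((γ₁ - s) ^ 2) ^ 2 by ring]
  exact div_pos (by linarith) h1

lemma rho_deriv_zero (γ₁ : ℝ) (ρ : ℝ → ℝ)
    (hρ : ρ = fun s : ℝ => if γ₁ < s then Real.exp (-1 / (γ₁ - s) ^ 2) else 0)
    {s : ℝ} (hs : s ≤ γ₁) : HasDerivAt ρ 0 s := by
  rcases lt_or_eq_of_le hs with hlt | rfl
  · have heq : ρ =ᶠ[nhds s] fun _ => (0:ℝ) := by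
      filter_upwards [eventually_lt_nhds hlt] with t ht
      rw [hρ]; simp [not_lt.mpr ht.le]
    exact (hasDerivAt_const s (0:ℝ)).congr_of_eventuallyEq heq
  · -- s = γ₁
    rw [hasDerivAt_iff_isLittleO]
    have hρ0 : ρ s = 0 := by rw [hρ]; simp
    simp only [hρ0, sub_zero, smul_zero]
    have hbig : (fun t => ρ t) =O[nhds s] fun t => (t - s) ^ 2 := by
      apply IsBigO.of_bound 1
      filter_upwards with t
      rcases le_or_gt t s with h | h
      · rw [hρ]; simp [not_lt.mpr h]; positivity
      · have h2 : (0:ℝ) < (s - t) ^ 2 := by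
          have : s - t ≠ 0 := by intro hc; linarith [sub_eq_zero.mp hc]
          positivity
        have hle : ρ t ≤ (s - t) ^ 2 := by
          rw [hρ]; simp only [h, if_true]
          rw [show (-1 : ℝ) / (s - t) ^ 2 = -(((s - t) ^ 2)⁻¹) by rw [neg_div, one_div],
            Real.exp_neg]
          rw [inv_le_comm₀ (Real.exp_pos _) h2] at *
          calc ((s - t) ^ 2)⁻¹ ≤ ((s - t) ^ 2)⁻¹ + 1 := by linarith
            _ ≤ Real.exp (((s - t) ^ 2)⁻¹) := Real.add_one_le_exp _
        have hpos : 0 ≤ ρ t := by rw [hρ]; simp only [h, if_true]; positivity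
        rw [Real.norm_eq_abs, Real.norm_eq_abs, abs_of_nonneg hpos,
          abs_of_nonneg (le_of_lt (by nlinarith : (0:ℝ) < (t - s) ^ 2))]
        nlinarith
    have hlittle : (fun t : ℝ => (t - s) ^ 2) =o[nhds s] fun t => t - s := by
      have h1 : (fun u : ℝ => u ^ 2) =o[nhds 0] fun u : ℝ => u ^ 1 :=
        isLittleO_pow_pow one_lt_two
      have h2 : Tendsto (fun t : ℝ => t - s) (nhds s) (nhds 0) := by
        simpa using (tendsto_id (x := nhds s)).sub_const s
      simpa [Function.comp_def] using h1.comp_tendsto h2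
    exact hbig.trans_isLittleO hlittle

/-- For `Ṽ = ρ ∘ V`, where `ρ(x) = exp(−1/(γ₁ − x)²)` for `x > γ₁` and `ρ(x) = 0` for
`x ≤ γ₁`: if `∇V(x)ᵀ f(x) < 0` whenever `x ∈ D` and `V(x) > γ₁`, then
`{x ∈ D : ∇Ṽ(x)ᵀ f(x) = 0} = {x ∈ D : V(x) ≤ γ₁}`. -/
theorem rho_composition_zero_set {n : ℕ} (γ₁ : ℝ)
    (ρ : ℝ → ℝ)
    (hρ : ρ = fun s : ℝ => if γ₁ < s then Real.exp (-1 / (γ₁ - s) ^ 2) else 0)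
    (D : Set (EuclideanSpace ℝ (Fin n)))
    (f : EuclideanSpace ℝ (Fin n) → EuclideanSpace ℝ (Fin n))
    (V : EuclideanSpace ℝ (Fin n) → ℝ)
    (hV : ContDiff ℝ 1 V)
    (hdec : ∀ x ∈ D, γ₁ < V x → (inner ℝ (gradient V x) (f x) : ℝ) < 0) :
    {x ∈ D | (inner ℝ (gradient (fun y => ρ (V y)) x) (f x) : ℝ) = 0} =
      {x ∈ D | V x ≤ γ₁} := by
  ext x
  simp only [Set.mem_setOf_eq]
  have hVd : DifferentiableAt ℝ V x := (hV.differentiable one_ne_zero).differentiableAt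
  have hVg : HasGradientAt V (gradient V x) x := hVd.hasGradientAt
  have key : ∀ c : ℝ, HasDerivAt ρ c (V x) →
      HasGradientAt (fun y => ρ (V y)) (c • gradient V x) x := by
    intro c hc
    have h1 := hc.comp_hasFDerivAt x hVg.hasFDerivAt
    rw [hasGradientAt_iff_hasFDerivAt]
    convert h1 using 1
    · rfl
    · rfl
    · exact (InnerProductSpace.toDual ℝ _).map_smul c (gradient V x)
  constructor
  · rintro ⟨hxD, hinner⟩
    refine ⟨hxD, ?_⟩
    by_contra hVx
    push_neg at hVx
    obtain ⟨d, hd, hder⟩ := rho_deriv_pos γ₁ ρ hρ hVx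
    have hg := (key d hder).gradient
    rw [hg, real_inner_smul_left] at hinner
    have := hdec x hxD hVx
    nlinarith
  · rintro ⟨hxD, hVx⟩
    refine ⟨hxD, ?_⟩
    have hder := rho_deriv_zero γ₁ ρ hρ hVx
    have hg := (key 0 hder).gradient
    rw [hg, zero_smul, inner_zero_left]
end

section
/- Let D ⊆ ℝⁿ be compact, let V : ℝⁿ → ℝ be continuously differentiable, and let γ₁ < γ₂ be real numbers such that {y ∈ D : V(y) ≤ γ₂} is contained in the interior of D and ∇V(x)ᵀ f(x) < 0 for every x ∈ D with V(x) > γ₁. Then the set S := {y ∈ D : V(y) ≤ γ₂} is an invariant set of the ODE, i.e., φ(x,t) ∈ S for all x ∈ S and t ≥ 0. -/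
open Filter Metric Set
open scoped Topology

/-- The sublevel set `S = {y ∈ D : V(y) ≤ γ₂}` is invariant when it is contained in the
interior of the compact set `D` and `V` is strictly decreasing along trajectories on
`{x ∈ D : V(x) > γ₁}`. -/
theorem sublevel_invariant {n : ℕ}
    (f : EuclideanSpace ℝ (Fin n) → EuclideanSpace ℝ (Fin n))
    (hf : ContDiff ℝ 1 f) (hf0 : f 0 = 0)
    (φ : EuclideanSpace ℝ (Fin n) → ℝ → EuclideanSpace ℝ (Fin n))
    (hφ0 : ∀ x, φ x 0 = x)
    (hφC : ContDiffOn ℝ 1 (fun p : EuclideanSpace ℝ (Fin n) × ℝ => φ p.1 p.2)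
      (Set.univ ×ˢ Set.Ici (0 : ℝ)))
    (hφd : ∀ x t, 0 ≤ t → HasDerivWithinAt (φ x) (f (φ x t)) (Set.Ici 0) t)
    (hsemi : ∀ x t s, 0 ≤ t → 0 ≤ s → φ (φ x t) s = φ x (t + s))
    (D : Set (EuclideanSpace ℝ (Fin n))) (hD : IsCompact D)
    (V : EuclideanSpace ℝ (Fin n) → ℝ)
    (hV : ContDiff ℝ 1 V)
    (γ₁ γ₂ : ℝ) (hγ : γ₁ < γ₂)
    (hsub : {y ∈ D | V y ≤ γ₂} ⊆ interior D)
    (hdec : ∀ x ∈ D, γ₁ < V x → lieDeriv V f x < 0) :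
    ∀ x ∈ {y ∈ D | V y ≤ γ₂}, ∀ t, 0 ≤ t → φ x t ∈ {y ∈ D | V y ≤ γ₂} := by
  intro x hx t ht
  -- continuity of the flow curve
  have hcont : ContinuousOn (φ x) (Ici (0:ℝ)) := by
    have h1 : ContinuousOn (fun p : EuclideanSpace ℝ (Fin n) × ℝ => φ p.1 p.2)
        (Set.univ ×ˢ Set.Ici (0:ℝ)) := hφC.continuousOn
    have h2 : ContinuousOn (fun u : ℝ => ((x, u) : EuclideanSpace ℝ (Fin n) × ℝ))
        (Ici (0:ℝ)) := (continuous_const.prodMk continuous_id).continuousOn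
    exact h1.comp h2 (fun u hu => ⟨mem_univ _, hu⟩)
  set s : Set ℝ := Ici (0:ℝ) ∩ φ x ⁻¹' (D ∩ V ⁻¹' Iic γ₂) with hs_def
  have hcl : IsClosed s :=
    hcont.preimage_isClosed_of_isClosed isClosed_Ici
      (hD.isClosed.inter (isClosed_Iic.preimage hV.continuous))
  have key : Icc 0 t ⊆ s := by
    apply IsClosed.Icc_subset_of_forall_exists_gt (hcl.inter isClosed_Icc)
    · exact ⟨Set.self_mem_Ici, by simpa [hφ0 x] using ⟨hx.1, hx.2⟩⟩
    · rintro u ⟨⟨hu0, huD, huV⟩, -, -⟩ y hy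
      have huV : V (φ x u) ≤ γ₂ := huV
      have huD : φ x u ∈ D := huD
      -- φ x u ∈ interior D
      have hint : φ x u ∈ interior D := hsub ⟨huD, huV⟩
      have hcontu : ContinuousWithinAt (φ x) (Ici 0) u := hcont u hu0
      have hIoi_le : 𝓝[Ioi u] u ≤ 𝓝[Ici (0:ℝ)] u :=
        nhdsWithin_mono u (fun z hz => show (0:ℝ) ≤ z from le_trans hu0 (le_of_lt hz))
      have hevD : ∀ᶠ z in 𝓝[Ioi u] u, φ x z ∈ D := by
        have h := hcontu.eventually_mem (isOpen_interior.mem_nhds hint)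
        exact (h.filter_mono hIoi_le).mono (fun z hz => interior_subset hz)
      have hevV : ∀ᶠ z in 𝓝[Ioi u] u, V (φ x z) ≤ γ₂ := by
        rcases lt_or_eq_of_le huV with hlt | heq
        · have hVc : ContinuousWithinAt (fun z => V (φ x z)) (Ici 0) u :=
            (hV.continuous.continuousAt).comp_continuousWithinAt hcontu
          have h := hVc.eventually_mem (Iio_mem_nhds hlt : Iio γ₂ ∈ 𝓝 (V (φ x u)))
          exact (h.filter_mono hIoi_le).mono (fun z hz => le_of_lt hz)
        · -- V (φ x u) = γ₂ > γ₁, use the strict decrease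
          have hL : lieDeriv V f (φ x u) < 0 := hdec _ huD (heq ▸ hγ)
          have hVd : HasDerivWithinAt (fun z => V (φ x z))
              (lieDeriv V f (φ x u)) (Ici 0) u := by
            have hdiff : DifferentiableAt ℝ V (φ x u) :=
              (hV.differentiable one_ne_zero).differentiableAt
            have hgrad := hdiff.hasGradientAt
            have hfd : HasFDerivAt V (InnerProductSpace.toDual ℝ _ (gradient V (φ x u)))
                (φ x u) := hgrad.hasFDerivAt
            have := hfd.comp_hasDerivWithinAt u (hφd x u hu0)
            exact this
          have hVd' : HasDerivWithinAt (fun z => V (φ x z))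
              (lieDeriv V f (φ x u)) (Ioi u) u :=
            hVd.mono (fun z hz => show (0:ℝ) ≤ z from le_trans hu0 (le_of_lt hz))
          have hslope := hasDerivWithinAt_iff_tendsto_slope.mp hVd'
          have hIoi_diff : Ioi u \ {u} = Ioi u :=
            Set.diff_singleton_eq_self (by simp)
          rw [hIoi_diff] at hslope
          have hev : ∀ᶠ z in 𝓝[Ioi u] u,
              slope (fun z => V (φ x z)) u z < 0 :=
            hslope.eventually (eventually_lt_nhds hL)
          filter_upwards [hev, self_mem_nhdsWithin] with z hz hz'
          have hzu : u < z := hz'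
          have : slope (fun z => V (φ x z)) u z * (z - u) < 0 :=
            mul_neg_of_neg_of_pos hz (sub_pos.mpr hzu)
          rw [slope_def_field] at this
          have h2 : V (φ x z) - V (φ x u) < 0 := by
            have := this
            rw [div_mul_cancel₀] at this
            · linarith
            · exact ne_of_gt (sub_pos.mpr hzu)
          linarith [heq ▸ h2]
      have hev0 : ∀ᶠ z in 𝓝[Ioi u] u, (0:ℝ) ≤ z :=
        eventually_nhdsWithin_of_forall (fun z hz => le_trans hu0 (le_of_lt hz))
      have hIoc : Ioc u y ∈ 𝓝[Ioi u] u := Ioc_mem_nhdsGT_of_mem ⟨le_refl u, hy⟩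
      have := (((hevD.and hevV).and hev0).and hIoc).exists
      rcases this with ⟨z, ⟨⟨hzD, hzV⟩, hz0⟩, hzIoc⟩
      exact ⟨z, ⟨hz0, hzD, hzV⟩, hzIoc⟩
  have := key ⟨ht, le_refl t⟩
  exact ⟨this.2.1, this.2.2⟩
end

section
/- Let D ⊂ ℝⁿ be compact, let V : ℝⁿ → ℝ be continuously differentiable, and let γ₁ < γ₂ and η, ε, a > 0 be such that: (i) B_ε({y ∈ D : V(y) ≤ γ₁}) ⊂ B_η(0); (ii) {y ∈ D : V(y) ≤ γ₂} is contained in the interior of D; (iii) ∇V(x)ᵀ f(x) < −a < 0 for all x ∈ D with V(x) > γ₁. Then for every x ∈ {y ∈ D : V(y) ≤ γ₂} \ B_η(0) there exists T > 0 such that φ(x,T) ∈ B_η(0). -/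
open Filter Metric Set
open scoped Topology

lemma lieDeriv_eq_fderiv {n : ℕ} (V : EuclideanSpace ℝ (Fin n) → ℝ)
    (f : EuclideanSpace ℝ (Fin n) → EuclideanSpace ℝ (Fin n))
    (x : EuclideanSpace ℝ (Fin n)) : lieDeriv V f x = fderiv ℝ V x (f x) := by
  rw [lieDeriv, gradient, InnerProductSpace.toDual_symm_apply]

/-- "Donut" Lyapunov condition: every trajectory starting in
`{y ∈ D : V(y) ≤ γ₂} \ B_η(0)` enters the ball `B_η(0)`. -/
theorem donut_reaches_ball {n : ℕ}
    (f : EuclideanSpace ℝ (Fin n) → EuclideanSpace ℝ (Fin n))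
    (hf : ContDiff ℝ 1 f) (hf0 : f 0 = 0)
    (φ : EuclideanSpace ℝ (Fin n) → ℝ → EuclideanSpace ℝ (Fin n))
    (hφ0 : ∀ x, φ x 0 = x)
    (hφC : ContDiffOn ℝ 1 (fun p : EuclideanSpace ℝ (Fin n) × ℝ => φ p.1 p.2)
      (Set.univ ×ˢ Set.Ici (0 : ℝ)))
    (hφd : ∀ x t, 0 ≤ t → HasDerivWithinAt (φ x) (f (φ x t)) (Set.Ici 0) t)
    (hsemi : ∀ x t s, 0 ≤ t → 0 ≤ s → φ (φ x t) s = φ x (t + s))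
    (D : Set (EuclideanSpace ℝ (Fin n))) (hD : IsCompact D)
    (V : EuclideanSpace ℝ (Fin n) → ℝ)
    (hV : ContDiff ℝ 1 V)
    (γ₁ γ₂ η ε a : ℝ) (hγ : γ₁ < γ₂) (hη : 0 < η) (hε : 0 < ε) (ha : 0 < a)
    (hthick : Metric.thickening ε {y ∈ D | V y ≤ γ₁} ⊆ Metric.ball 0 η)
    (hsub : {y ∈ D | V y ≤ γ₂} ⊆ interior D)
    (hdec : ∀ x ∈ D, γ₁ < V x → lieDeriv V f x < -a) :
    ∀ x ∈ {y ∈ D | V y ≤ γ₂} \ Metric.ball (0 : EuclideanSpace ℝ (Fin n)) η,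
      ∃ T > 0, φ x T ∈ Metric.ball (0 : EuclideanSpace ℝ (Fin n)) η := by
  intro x hx
  by_contra hcon
  push_neg at hcon
  obtain ⟨⟨hxD, hxV⟩, hxball⟩ := hx
  -- The "donut" set K
  set K : Set (EuclideanSpace ℝ (Fin n)) :=
    {y ∈ D | V y ≤ γ₂} \ Metric.ball 0 η with hKdef
  have hKclosed : IsClosed K := by
    rw [hKdef, Set.diff_eq]
    exact ((hD.isClosed.inter (isClosed_Iic.preimage hV.continuous)).inter
      isOpen_ball.isClosed_compl)
  have hKV : ∀ y ∈ K, γ₁ < V y := by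
    intro y hy
    by_contra hle
    push_neg at hle
    exact hy.2 (hthick (self_subset_thickening hε _ ⟨hy.1.1, hle⟩))
  have hKd : ∀ y ∈ K, lieDeriv V f y < -a := fun y hy => hdec y hy.1.1 (hKV y hy)
  have hKint : K ⊆ interior D := fun y hy => hsub hy.1
  have hxK : x ∈ K := ⟨⟨hxD, hxV⟩, hxball⟩
  -- continuity of the trajectory
  have hφcont : ContinuousOn (φ x) (Ici 0) := fun t ht =>
    (hφd x t ht).continuousWithinAt
  -- derivative of g = V ∘ φ x
  set g : ℝ → ℝ := fun t => V (φ x t) with hgdef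
  have hg : ∀ t, 0 ≤ t → HasDerivWithinAt g (lieDeriv V f (φ x t)) (Ici 0) t := by
    intro t ht
    have h1 := hφd x t ht
    have h2 : HasFDerivAt V (fderiv ℝ V (φ x t)) (φ x t) :=
      (hV.differentiable one_ne_zero (φ x t)).hasFDerivAt
    have := h2.comp_hasDerivWithinAt t h1
    rwa [lieDeriv_eq_fderiv]
  -- no point of the trajectory is ever in the ball
  have hnoball : ∀ t, 0 ≤ t → φ x t ∉ Metric.ball (0 : EuclideanSpace ℝ (Fin n)) η := by
    intro t ht
    rcases eq_or_lt_of_le ht with h | h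
    · rw [← h, hφ0]; exact hxball
    · exact hcon t h
  -- decrease estimate
  have hdecrease : ∀ t, 0 ≤ t → (∀ s ∈ Icc 0 t, φ x s ∈ K) → g t + a * t ≤ g 0 := by
    intro t ht hall
    have hanti : AntitoneOn (fun s => g s + a * s) (Icc 0 t) := by
      apply antitoneOn_of_deriv_nonpos (convex_Icc 0 t)
      · exact (hV.continuous.comp_continuousOn (hφcont.mono Icc_subset_Ici_self)).add
          (continuous_const.mul continuous_id).continuousOn
      · intro s hs
        rw [interior_Icc] at hs
        have hder : HasDerivAt (fun s => g s + a * s) (lieDeriv V f (φ x s) + a) s := by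
          have h1 : HasDerivAt g (lieDeriv V f (φ x s)) s :=
            (hg s hs.1.le).hasDerivAt (Ici_mem_nhds hs.1)
          exact (h1.add ((hasDerivAt_id s).const_mul a)).congr_deriv (by ring)
        exact hder.differentiableAt.differentiableWithinAt
      · intro s hs
        rw [interior_Icc] at hs
        have hder : HasDerivAt (fun s => g s + a * s) (lieDeriv V f (φ x s) + a) s := by
          have h1 : HasDerivAt g (lieDeriv V f (φ x s)) s :=
            (hg s hs.1.le).hasDerivAt (Ici_mem_nhds hs.1)
          exact (h1.add ((hasDerivAt_id s).const_mul a)).congr_deriv (by ring)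
        rw [hder.deriv]
        have := hKd _ (hall s ⟨hs.1.le, hs.2.le⟩)
        linarith
    have := hanti (left_mem_Icc.mpr ht) (right_mem_Icc.mpr ht) ht
    simpa using this
  -- strict local decrease to the right, plus staying in K
  have hstep : ∀ τ, 0 ≤ τ → φ x τ ∈ K → ∀ᶠ s in 𝓝[>] τ, φ x s ∈ K := by
    intro τ hτ hτK
    -- slope argument
    have hd : lieDeriv V f (φ x τ) < 0 := lt_trans (hKd _ hτK) (by linarith)
    have hder : HasDerivWithinAt g (lieDeriv V f (φ x τ)) (Ici τ) τ :=
      (hg τ hτ).mono (Ici_subset_Ici.mpr hτ)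
    have hslope := hasDerivWithinAt_iff_tendsto_slope.mp hder
    rw [Ici_sdiff_left] at hslope
    have hslope_neg : ∀ᶠ s in 𝓝[>] τ, slope g τ s < 0 :=
      hslope (Iio_mem_nhds hd)
    have hVlt : ∀ᶠ s in 𝓝[>] τ, g s < g τ := by
      filter_upwards [hslope_neg, self_mem_nhdsWithin] with s hs hs'
      have hsτ : 0 < s - τ := sub_pos.mpr hs'
      have : (g s - g τ) / (s - τ) < 0 := by rwa [slope_def_field] at hs
      have := (div_neg_iff.mp this)
      rcases this with ⟨_, h⟩ | ⟨h, _⟩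
      · linarith
      · linarith
    -- stays in D
    have hD' : ∀ᶠ s in 𝓝[>] τ, φ x s ∈ D := by
      have hc : Tendsto (φ x) (𝓝[Ici 0] τ) (𝓝 (φ x τ)) := hφcont τ hτ
      have hmem : interior D ∈ 𝓝 (φ x τ) := isOpen_interior.mem_nhds (hKint hτK)
      have h2 : ∀ᶠ s in 𝓝[Ici 0] τ, φ x s ∈ interior D := hc hmem
      have hle : 𝓝[>] τ ≤ 𝓝[Ici 0] τ :=
        nhdsWithin_mono τ (fun s hs => le_trans hτ (le_of_lt hs))
      exact (Eventually.filter_mono hle h2).mono (fun s hs => interior_subset hs)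
    filter_upwards [hVlt, hD', self_mem_nhdsWithin] with s h1 h2 h3
    refine ⟨⟨h2, le_trans h1.le hτK.1.2⟩, hnoball s (le_trans hτ h3.le)⟩
  -- time horizon
  set T₁ : ℝ := (γ₂ - γ₁) / a + 1 with hT₁def
  have hT₁pos : 0 < T₁ := by
    have : 0 ≤ (γ₂ - γ₁) / a := div_nonneg (by linarith) ha.le
    rw [hT₁def]; linarith
  -- the set of good times
  set A : Set ℝ := {t ∈ Icc 0 T₁ | ∀ s ∈ Icc 0 t, φ x s ∈ K} with hAdef
  have h0A : (0 : ℝ) ∈ A := by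
    refine ⟨⟨le_rfl, hT₁pos.le⟩, ?_⟩
    intro s hs
    rw [show s = 0 from le_antisymm hs.2 hs.1, hφ0]
    exact hxK
  have hAne : A.Nonempty := ⟨0, h0A⟩
  have hAbdd : BddAbove A := ⟨T₁, fun t ht => ht.1.2⟩
  set τ : ℝ := sSup A with hτdef
  have hτ0 : 0 ≤ τ := le_csSup hAbdd h0A
  have hτT₁ : τ ≤ T₁ := csSup_le hAne (fun t ht => ht.1.2)
  -- every s in [0, τ] lies in K
  have hτA : ∀ s ∈ Icc 0 τ, φ x s ∈ K := by
    have hlt : ∀ s, 0 ≤ s → s < τ → φ x s ∈ K := by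
      intro s hs hsτ
      obtain ⟨t, htA, hst⟩ := exists_lt_of_lt_csSup hAne hsτ
      exact htA.2 s ⟨hs, hst.le⟩
    have hτK : φ x τ ∈ K := by
      rcases eq_or_lt_of_le hτ0 with h0 | h0
      · rw [← h0, hφ0]; exact hxK
      · have hE : IsClosed (Ici 0 ∩ (φ x) ⁻¹' K) :=
          hφcont.preimage_isClosed_of_isClosed isClosed_Ici hKclosed
        have hsub' : Ico 0 τ ⊆ Ici 0 ∩ (φ x) ⁻¹' K := by
          intro u hu
          exact ⟨hu.1, hlt u hu.1 hu.2⟩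
        have hmemc : τ ∈ closure (Ico 0 τ) := by
          rw [closure_Ico (by exact ne_of_lt h0)]
          exact ⟨hτ0, le_rfl⟩
        exact (hE.closure_subset ((closure_mono hsub') hmemc)).2
    intro s hs
    rcases lt_or_eq_of_le hs.2 with h | h
    · exact hlt s hs.1 h
    · rw [h]; exact hτK
  -- τ = T₁
  have hτeq : τ = T₁ := by
    by_contra hne
    have hτlt : τ < T₁ := lt_of_le_of_ne hτT₁ hne
    have hτK : φ x τ ∈ K := hτA τ ⟨hτ0, le_rfl⟩
    have hev := hstep τ hτ0 hτK
    obtain ⟨u, hu, hIoo⟩ := mem_nhdsGT_iff_exists_Ioo_subset.mp hev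
    set t' : ℝ := min ((τ + u) / 2) T₁ with ht'def
    have ht'τ : τ < t' := by
      apply lt_min
      · rw [mem_Ioi] at hu; linarith
      · exact hτlt
    have ht'u : t' < u := by
      apply lt_of_le_of_lt (min_le_left _ _)
      rw [mem_Ioi] at hu; linarith
    have ht'A : t' ∈ A := by
      refine ⟨⟨le_trans hτ0 ht'τ.le, min_le_right _ _⟩, ?_⟩
      intro s hs
      rcases le_or_gt s τ with h | h
      · exact hτA s ⟨hs.1, h⟩
      · exact hIoo ⟨h, lt_of_le_of_lt hs.2 ht'u⟩
    have := le_csSup hAbdd ht'A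
    linarith
  -- final contradiction
  have hallK : ∀ s ∈ Icc 0 T₁, φ x s ∈ K := by rw [← hτeq]; exact hτA
  have hdec' := hdecrease T₁ hT₁pos.le hallK
  have hg0 : g 0 ≤ γ₂ := by rw [hgdef]; simp only [hφ0]; exact hxV
  have haT₁ : a * T₁ = (γ₂ - γ₁) + a := by
    rw [hT₁def]; field_simp
  have hgT₁ : g T₁ ≤ γ₁ - a := by linarith [hdec', hg0, haT₁.le]
  have := hKV _ (hallK T₁ ⟨hT₁pos.le, le_rfl⟩)
  have : γ₁ < g T₁ := this
  linarith
end

section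
/- Let D ⊂ ℝⁿ be compact with 0 ∈ D, let V₁, V₂ : ℝⁿ → ℝ be continuously differentiable, and let γ₁ < γ₂, γ₃ > 0 and η, ε, a > 0 be such that: (i) B_ε({y ∈ D : V₁(y) ≤ γ₁}) ⊂ B_η(0); (ii) {y ∈ D : V₁(y) ≤ γ₂} is contained in the interior of D; (iii) ∇V₁(x)ᵀ f(x) < −a < 0 for all x ∈ D with V₁(x) > γ₁; (iv) V₂(0) = 0 and V₂(x) > 0 for all x ∈ D \ {0}; (v) ∇V₂(x)ᵀ f(x) ≤ 0 for all x ∈ D; (vi) the only point x for which φ(x,t) ∈ {y ∈ D : ∇V₂(y)ᵀ f(y) = 0} for all t ≥ 0 is x = 0; (vii) B_η(0) ⊆ {y ∈ D : V₂(y) ≤ γ₃} and {y ∈ D : V₂(y) ≤ γ₃} is contained in the interior of D. Then {y ∈ D : V₁(y) ≤ γ₂} ∪ {y ∈ D : V₂(y) ≤ γ₃} ⊆ ROA_f. -/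
open Filter Metric Set
open scoped Topology

section TwoStepAux

variable {n : ℕ} {f : EuclideanSpace ℝ (Fin n) → EuclideanSpace ℝ (Fin n)}
  {φ : EuclideanSpace ℝ (Fin n) → ℝ → EuclideanSpace ℝ (Fin n)}
  {D : Set (EuclideanSpace ℝ (Fin n))} {V : EuclideanSpace ℝ (Fin n) → ℝ}

lemma lie_chain
    (hφd : ∀ x t, 0 ≤ t → HasDerivWithinAt (φ x) (f (φ x t)) (Set.Ici 0) t)
    (hV : ContDiff ℝ 1 V)
    (x : EuclideanSpace ℝ (Fin n)) {t : ℝ} (ht : 0 ≤ t) :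
    HasDerivWithinAt (fun s => V (φ x s)) (lieDeriv V f (φ x t)) (Set.Ici 0) t := by
  have hg := ((hV.differentiable one_ne_zero) (φ x t)).hasGradientAt.hasFDerivAt
  have := hg.comp_hasDerivWithinAt t (hφd x t ht)
  simp [lieDeriv] at this ⊢; exact this

lemma anti_aux {g g' : ℝ → ℝ} (hg : ∀ t, 0 ≤ t → HasDerivWithinAt g (g' t) (Set.Ici 0) t)
    {T : ℝ} (h' : ∀ t ∈ Set.Ioo 0 T, g' t ≤ 0) : AntitoneOn g (Set.Icc 0 T) := by
  apply antitoneOn_of_deriv_nonpos (convex_Icc 0 T)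
  · intro t ht; exact ((hg t ht.1).continuousWithinAt).mono Set.Icc_subset_Ici_self
  · rw [interior_Icc]; intro t ht
    exact ((((hg t ht.1.le)).hasDerivAt (Ici_mem_nhds ht.1)).differentiableAt).differentiableWithinAt
  · rw [interior_Icc]; intro t ht
    rw [(((hg t ht.1.le)).hasDerivAt (Ici_mem_nhds ht.1)).deriv]; exact h' t ht

lemma invariant
    (hφ0 : ∀ x, φ x 0 = x)
    (hφd : ∀ x t, 0 ≤ t → HasDerivWithinAt (φ x) (f (φ x t)) (Set.Ici 0) t)
    (hD : IsCompact D) (hV : ContDiff ℝ 1 V) {γ : ℝ}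
    (hsub : {y ∈ D | V y ≤ γ} ⊆ interior D)
    (hdec : ∀ y ∈ D, lieDeriv V f y ≤ 0)
    {x : EuclideanSpace ℝ (Fin n)} (hx : x ∈ D) (hxV : V x ≤ γ) :
    ∀ t, 0 ≤ t → φ x t ∈ D ∧ V (φ x t) ≤ γ := by
  set K : Set (EuclideanSpace ℝ (Fin n)) := {y ∈ D | V y ≤ γ} with hK
  have hKclosed : IsClosed K := by
    have : K = D ∩ V ⁻¹' Set.Iic γ := rfl
    rw [this]; exact hD.isClosed.inter (isClosed_Iic.preimage hV.continuous)
  by_contra hcon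
  push_neg at hcon
  obtain ⟨t₀, ht₀, hbad⟩ := hcon
  set B : Set ℝ := {t | 0 ≤ t ∧ φ x t ∉ K} with hB
  have hBne : B.Nonempty := ⟨t₀, ht₀, fun h => absurd h.2 (not_le.2 (hbad h.1))⟩
  have hBbd : BddBelow B := ⟨0, fun t ht => ht.1⟩
  set t₁ := sInf B with ht₁
  have ht₁0 : 0 ≤ t₁ := le_csInf hBne fun t ht => ht.1
  have hIco : ∀ s ∈ Set.Ico 0 t₁, φ x s ∈ K := by
    intro s hs
    by_contra h
    exact absurd (csInf_le hBbd ⟨hs.1, h⟩) (not_le.2 hs.2)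
  have hmem : φ x t₁ ∈ K := by
    rcases eq_or_lt_of_le ht₁0 with h | h
    · rw [← h, hφ0]; exact ⟨hx, hxV⟩
    · have hc : ContinuousWithinAt (φ x) (Set.Ico 0 t₁) t₁ :=
        ((hφd x t₁ ht₁0).continuousWithinAt).mono Set.Ico_subset_Ici_self
      have hcl : t₁ ∈ closure (Set.Ico 0 t₁) := by
        rw [closure_Ico h.ne]; exact ⟨ht₁0, le_rfl⟩
      have hmc := hc.mem_closure_image hcl
      have himg : φ x '' Set.Ico 0 t₁ ⊆ K := by rintro _ ⟨s, hs, rfl⟩; exact hIco s hs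
      exact hKclosed.closure_subset (closure_mono himg hmc)
  have hcont : ContinuousWithinAt (φ x) (Set.Ici 0) t₁ := (hφd x t₁ ht₁0).continuousWithinAt
  have hnb : (φ x) ⁻¹' interior D ∈ 𝓝[Set.Ici 0] t₁ :=
    hcont (isOpen_interior.mem_nhds (hsub hmem))
  rw [Metric.mem_nhdsWithin_iff] at hnb
  obtain ⟨δ, hδ, hδsub⟩ := hnb
  have hallD : ∀ s ∈ Set.Icc 0 (t₁ + δ/2), φ x s ∈ D := by
    intro s hs
    rcases lt_or_ge s t₁ with h | h
    · exact (hIco s ⟨hs.1, h⟩).1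
    rcases eq_or_lt_of_le h with h' | h'
    · rw [← h']; exact hmem.1
    · have : s ∈ Metric.ball t₁ δ ∩ Set.Ici 0 :=
        ⟨Metric.mem_ball.2 (by rw [Real.dist_eq, abs_of_nonneg (by linarith)]; linarith [hs.2]), hs.1⟩
      exact interior_subset (hδsub this)
  have hanti : AntitoneOn (fun s => V (φ x s)) (Set.Icc 0 (t₁ + δ/2)) :=
    anti_aux (fun t ht => lie_chain hφd hV x ht)
      (fun t ht => hdec _ (hallD t ⟨ht.1.le, ht.2.le⟩))
  have hKall : ∀ s ∈ Set.Icc 0 (t₁ + δ/2), φ x s ∈ K := by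
    intro s hs
    refine ⟨hallD s hs, ?_⟩
    have h0 : (0:ℝ) ∈ Set.Icc 0 (t₁ + δ/2) := Set.left_mem_Icc.2 (by linarith)
    have h2 : V (φ x s) ≤ V (φ x 0) := hanti h0 hs hs.1
    rw [hφ0] at h2
    exact h2.trans hxV
  obtain ⟨b, hbB, hbT⟩ := (csInf_lt_iff hBbd hBne).1 (show sInf B < t₁ + δ/2 by rw [← ht₁]; linarith)
  exact hbB.2 (hKall b ⟨hbB.1, hbT.le⟩)

lemma hitting
    (hφ0 : ∀ x, φ x 0 = x)
    (hφd : ∀ x t, 0 ≤ t → HasDerivWithinAt (φ x) (f (φ x t)) (Set.Ici 0) t)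
    (hD : IsCompact D) (hV : ContDiff ℝ 1 V) {γ₁ γ₂ a : ℝ} (ha : 0 < a)
    (hsub : {y ∈ D | V y ≤ γ₂} ⊆ interior D)
    (hdec : ∀ y ∈ D, γ₁ < V y → lieDeriv V f y < -a)
    {x : EuclideanSpace ℝ (Fin n)} (hx : x ∈ D) (hxV : V x ≤ γ₂) :
    ∃ t, 0 ≤ t ∧ φ x t ∈ D ∧ V (φ x t) ≤ γ₁ := by
  rcases le_or_gt (V x) γ₁ with h | hxγ₁
  · exact ⟨0, le_rfl, by rw [hφ0]; exact ⟨hx, h⟩⟩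
  by_contra hno
  push_neg at hno
  set K : Set (EuclideanSpace ℝ (Fin n)) := {y ∈ D | γ₁ < V y ∧ V y ≤ γ₂} with hK
  set C : Set (EuclideanSpace ℝ (Fin n)) := {y ∈ D | γ₁ ≤ V y ∧ V y ≤ γ₂} with hC
  have hCclosed : IsClosed C := by
    have : C = D ∩ V ⁻¹' Set.Icc γ₁ γ₂ := by
      ext y
      simp only [hC, Set.mem_setOf_eq, Set.mem_inter_iff, Set.mem_preimage, Set.mem_Icc]
    rw [this]; exact hD.isClosed.inter (isClosed_Icc.preimage hV.continuous)
  set B : Set ℝ := {t | 0 ≤ t ∧ φ x t ∉ K} with hB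
  -- B is nonempty, for otherwise V decreases at rate a forever
  have hBne : B.Nonempty := by
    by_contra hBe
    have hall : ∀ t, 0 ≤ t → φ x t ∈ K := by
      intro t ht
      by_contra h
      exact hBe ⟨t, ht, h⟩
    set T : ℝ := (γ₂ - γ₁) / a + 1 with hT
    have hT0 : 0 < T := by
      have h1 : 0 < γ₂ - γ₁ := sub_pos.2 (hxγ₁.trans_le hxV)
      rw [hT]; positivity
    have hanti : AntitoneOn (fun s => V (φ x s) + a * s) (Set.Icc 0 T) := by
      apply anti_aux (g' := fun t => lieDeriv V f (φ x t) + a)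
      · intro t ht
        have h := (lie_chain hφd hV x ht).add (((hasDerivAt_id t).const_mul a).hasDerivWithinAt)
        simp only [mul_one] at h; exact h
      · intro t ht
        have hk := hall t ht.1.le
        have := hdec _ hk.1 hk.2.1
        linarith
    have h0 : (0:ℝ) ∈ Set.Icc 0 T := Set.left_mem_Icc.2 hT0.le
    have hTmem : T ∈ Set.Icc 0 T := Set.right_mem_Icc.2 hT0.le
    have hle : V (φ x T) + a * T ≤ V (φ x 0) + a * 0 := hanti h0 hTmem hT0.le
    rw [hφ0] at hle
    have haT : a * T = (γ₂ - γ₁) + a := by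
      rw [hT]; field_simp
    have := (hall T hT0.le).2.1
    linarith
  have hBbd : BddBelow B := ⟨0, fun t ht => ht.1⟩
  set t₁ := sInf B with ht₁
  have ht₁0 : 0 ≤ t₁ := le_csInf hBne fun t ht => ht.1
  have hIco : ∀ s ∈ Set.Ico 0 t₁, φ x s ∈ K := by
    intro s hs
    by_contra h
    exact absurd (csInf_le hBbd ⟨hs.1, h⟩) (not_le.2 hs.2)
  have hmemC : φ x t₁ ∈ C := by
    rcases eq_or_lt_of_le ht₁0 with h | h
    · rw [← h, hφ0]; exact ⟨hx, hxγ₁.le, hxV⟩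
    · have hc : ContinuousWithinAt (φ x) (Set.Ico 0 t₁) t₁ :=
        ((hφd x t₁ ht₁0).continuousWithinAt).mono Set.Ico_subset_Ici_self
      have hcl : t₁ ∈ closure (Set.Ico 0 t₁) := by
        rw [closure_Ico h.ne]; exact ⟨ht₁0, le_rfl⟩
      have hmc := hc.mem_closure_image hcl
      have himg : φ x '' Set.Ico 0 t₁ ⊆ C := by
        rintro _ ⟨s, hs, rfl⟩
        exact ⟨(hIco s hs).1, (hIco s hs).2.1.le, (hIco s hs).2.2⟩
      exact hCclosed.closure_subset (closure_mono himg hmc)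
  have ht₁γ₁ : γ₁ < V (φ x t₁) := hno t₁ ht₁0 hmemC.1
  have hmemK : φ x t₁ ∈ K := ⟨hmemC.1, ht₁γ₁, hmemC.2.2⟩
  -- φ x t₁ lies in the open set (interior D) ∩ {V > γ₁}
  have hUopen : IsOpen (interior D ∩ V ⁻¹' Set.Ioi γ₁) :=
    isOpen_interior.inter (isOpen_Ioi.preimage hV.continuous)
  have hUmem : φ x t₁ ∈ interior D ∩ V ⁻¹' Set.Ioi γ₁ :=
    ⟨hsub ⟨hmemK.1, hmemK.2.2⟩, ht₁γ₁⟩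
  have hcont : ContinuousWithinAt (φ x) (Set.Ici 0) t₁ := (hφd x t₁ ht₁0).continuousWithinAt
  have hnb : (φ x) ⁻¹' (interior D ∩ V ⁻¹' Set.Ioi γ₁) ∈ 𝓝[Set.Ici 0] t₁ :=
    hcont (hUopen.mem_nhds hUmem)
  rw [Metric.mem_nhdsWithin_iff] at hnb
  obtain ⟨δ, hδ, hδsub⟩ := hnb
  have hallDγ : ∀ s ∈ Set.Icc 0 (t₁ + δ/2), φ x s ∈ D ∧ γ₁ < V (φ x s) := by
    intro s hs
    rcases lt_or_ge s t₁ with h | h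
    · exact ⟨(hIco s ⟨hs.1, h⟩).1, (hIco s ⟨hs.1, h⟩).2.1⟩
    rcases eq_or_lt_of_le h with h' | h'
    · rw [← h']; exact ⟨hmemK.1, ht₁γ₁⟩
    · have : s ∈ Metric.ball t₁ δ ∩ Set.Ici 0 :=
        ⟨Metric.mem_ball.2 (by rw [Real.dist_eq, abs_of_nonneg (by linarith)]; linarith [hs.2]), hs.1⟩
      have h2 := hδsub this
      exact ⟨interior_subset h2.1, h2.2⟩
  have hanti : AntitoneOn (fun s => V (φ x s)) (Set.Icc 0 (t₁ + δ/2)) := by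
    apply anti_aux (fun t ht => lie_chain hφd hV x ht)
    intro t ht
    have h2 := hallDγ t ⟨ht.1.le, ht.2.le⟩
    have := hdec _ h2.1 h2.2
    linarith
  have hKall : ∀ s ∈ Set.Icc 0 (t₁ + δ/2), φ x s ∈ K := by
    intro s hs
    have h0 : (0:ℝ) ∈ Set.Icc 0 (t₁ + δ/2) := Set.left_mem_Icc.2 (by linarith)
    have h2 : V (φ x s) ≤ V (φ x 0) := hanti h0 hs hs.1
    rw [hφ0] at h2
    exact ⟨(hallDγ s hs).1, (hallDγ s hs).2, h2.trans hxV⟩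
  obtain ⟨b, hbB, hbT⟩ := (csInf_lt_iff hBbd hBne).1 (show sInf B < t₁ + δ/2 by rw [← ht₁]; linarith)
  exact hbB.2 (hKall b ⟨hbB.1, hbT.le⟩)

lemma lasalle
    (hφ0 : ∀ x, φ x 0 = x)
    (hφC : ContDiffOn ℝ 1 (fun p : EuclideanSpace ℝ (Fin n) × ℝ => φ p.1 p.2)
      (Set.univ ×ˢ Set.Ici (0 : ℝ)))
    (hφd : ∀ x t, 0 ≤ t → HasDerivWithinAt (φ x) (f (φ x t)) (Set.Ici 0) t)
    (hsemi : ∀ x t s, 0 ≤ t → 0 ≤ s → φ (φ x t) s = φ x (t + s))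
    (hD : IsCompact D) (hV : ContDiff ℝ 1 V) {γ : ℝ}
    (hV0 : V 0 = 0) (hpos : ∀ y ∈ D \ {0}, 0 < V y)
    (hsub : {y ∈ D | V y ≤ γ} ⊆ interior D)
    (hdec : ∀ y ∈ D, lieDeriv V f y ≤ 0)
    (hE : ∀ x : EuclideanSpace ℝ (Fin n),
      (∀ t, 0 ≤ t → φ x t ∈ {y ∈ D | lieDeriv V f y = 0}) ↔ x = 0)
    {x : EuclideanSpace ℝ (Fin n)} (hx : x ∈ D) (hxV : V x ≤ γ) :
    Tendsto (fun t => φ x t) atTop (𝓝 0) := by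
  have hinv := invariant hφ0 hφd hD hV hsub hdec hx hxV
  set K : Set (EuclideanSpace ℝ (Fin n)) := {y ∈ D | V y ≤ γ} with hKdef
  have hKclosed : IsClosed K := by
    have : K = D ∩ V ⁻¹' Set.Iic γ := rfl
    rw [this]; exact hD.isClosed.inter (isClosed_Iic.preimage hV.continuous)
  have hKcomp : IsCompact K := hD.of_isClosed_subset hKclosed (fun y hy => hy.1)
  set g : ℝ → ℝ := fun t => V (φ x t) with hgdef
  have hganti : AntitoneOn g (Set.Ici 0) := by
    intro s hs t ht hst
    have h := anti_aux (fun u hu => lie_chain hφd hV x hu)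
      (T := t) (fun u hu => hdec _ (hinv u hu.1.le).1)
    exact h ⟨hs, hst⟩ ⟨ht, le_rfl⟩ hst
  have hVnn : ∀ y ∈ D, 0 ≤ V y := by
    intro y hy
    rcases eq_or_ne y 0 with rfl | h
    · exact hV0.ge
    · exact (hpos y ⟨hy, h⟩).le
  set G : ℝ → ℝ := fun t => g (max t 0) with hGdef
  have hGanti : Antitone G := by
    intro s t hst
    exact hganti (Set.mem_Ici.2 (le_max_right s 0)) (Set.mem_Ici.2 (le_max_right t 0))
      (max_le_max hst le_rfl)
  have hGbdd : BddBelow (Set.range G) := by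
    refine ⟨0, ?_⟩
    rintro _ ⟨t, rfl⟩
    exact hVnn _ (hinv _ (le_max_right t 0)).1
  set c : ℝ := ⨅ t, G t with hcdef
  have hGlim : Tendsto G atTop (𝓝 c) := tendsto_atTop_ciInf hGanti hGbdd
  have hglim : Tendsto g atTop (𝓝 c) := by
    apply hGlim.congr'
    filter_upwards [eventually_ge_atTop (0:ℝ)] with t ht
    simp [hGdef, max_eq_left ht]
  -- continuity in the initial condition
  have hcx : ∀ s : ℝ, 0 ≤ s → Continuous (fun y => φ y s) := by
    intro s hs
    have h2 : Continuous fun y : EuclideanSpace ℝ (Fin n) => ((y, s) : EuclideanSpace ℝ (Fin n) × ℝ) :=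
      continuous_id.prodMk continuous_const
    have := hφC.continuousOn.comp_continuous h2 (fun y => ⟨Set.mem_univ y, hs⟩)
    exact this
  by_contra hcon
  rw [Metric.tendsto_atTop] at hcon
  push_neg at hcon
  obtain ⟨r, hr, hseq⟩ := hcon
  choose u hu₁ hu₂ using hseq
  set w : ℕ → ℝ := fun m => u (m : ℝ) with hwdef
  have hw0 : ∀ m : ℕ, (m : ℝ) ≤ w m := fun m => hu₁ (m : ℝ)
  have hwK : ∀ m, φ x (w m) ∈ K := fun m =>
    hinv (w m) ((Nat.cast_nonneg m).trans (hw0 m))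
  obtain ⟨p, hpK, σ, hσ, hconv⟩ := hKcomp.tendsto_subseq hwK
  set v : ℕ → ℝ := fun m => w (σ m) with hvdef
  have hv0 : ∀ m, 0 ≤ v m := fun m => (Nat.cast_nonneg (σ m)).trans (hw0 (σ m))
  have hvtop : Tendsto v atTop atTop := by
    apply tendsto_atTop_mono (fun m => ?_) tendsto_natCast_atTop_atTop
    calc (m : ℝ) ≤ (σ m : ℝ) := Nat.cast_le.2 hσ.le_apply
    _ ≤ w (σ m) := hw0 (σ m)
  have hconv' : Tendsto (fun m => φ x (v m)) atTop (𝓝 p) := hconv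
  have hpne : p ≠ 0 := by
    have hd : Tendsto (fun m => dist (φ x (v m)) 0) atTop (𝓝 (dist p 0)) :=
      hconv'.dist tendsto_const_nhds
    have hge : r ≤ dist p 0 :=
      ge_of_tendsto hd (Eventually.of_forall fun m => hu₂ _)
    intro h
    rw [h, dist_self] at hge
    linarith
  -- the limit point's orbit stays in K with V constant = c
  have horb : ∀ s, 0 ≤ s → φ p s ∈ K ∧ V (φ p s) = c := by
    intro s hs
    have h1 : Tendsto (fun m => φ (φ x (v m)) s) atTop (𝓝 (φ p s)) :=
      ((hcx s hs).tendsto p).comp hconv'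
    have h2 : Tendsto (fun m => φ x (v m + s)) atTop (𝓝 (φ p s)) :=
      h1.congr fun m => by rw [hsemi x (v m) s (hv0 m) hs]
    have hmem : ∀ m, φ x (v m + s) ∈ K := fun m => hinv _ (by linarith [hv0 m])
    have hK : φ p s ∈ K := hKclosed.mem_of_tendsto h2 (Eventually.of_forall hmem)
    have hval : Tendsto (fun m => g (v m + s)) atTop (𝓝 c) :=
      hglim.comp (tendsto_atTop_add_const_right atTop s hvtop)
    have hval2 : Tendsto (fun m => g (v m + s)) atTop (𝓝 (V (φ p s))) :=
      (hV.continuous.tendsto (φ p s)).comp h2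
    exact ⟨hK, tendsto_nhds_unique hval2 hval⟩
  have : ∀ t, 0 ≤ t → φ p t ∈ {y ∈ D | lieDeriv V f y = 0} := by
    intro t ht
    refine ⟨(horb t ht).1.1, ?_⟩
    have hconst : HasDerivWithinAt (fun s => V (φ p s)) 0 (Set.Ici 0) t := by
      apply (hasDerivWithinAt_const t (Set.Ici 0) c).congr
      · intro y hy; exact (horb y hy).2
      · exact (horb t ht).2
    have hchain := lie_chain hφd hV p ht
    have hu : UniqueDiffWithinAt ℝ (Set.Ici (0:ℝ)) t := uniqueDiffOn_Ici 0 t ht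
    have e1 := hchain.derivWithin hu
    have e2 := hconst.derivWithin hu
    exact e1.symm.trans e2
  exact hpne ((hE p).1 this)

end TwoStepAux

/-- Combining a "donut" function `V₁` with a Lyapunov function `V₂` yields the inner ROA
approximation `{y ∈ D : V₁(y) ≤ γ₂} ∪ {y ∈ D : V₂(y) ≤ γ₃} ⊆ ROA_f`. -/
theorem two_step_lyapunov_ROA {n : ℕ}
    (f : EuclideanSpace ℝ (Fin n) → EuclideanSpace ℝ (Fin n))
    (hf : ContDiff ℝ 1 f) (hf0 : f 0 = 0)
    (φ : EuclideanSpace ℝ (Fin n) → ℝ → EuclideanSpace ℝ (Fin n))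
    (hφ0 : ∀ x, φ x 0 = x)
    (hφC : ContDiffOn ℝ 1 (fun p : EuclideanSpace ℝ (Fin n) × ℝ => φ p.1 p.2)
      (Set.univ ×ˢ Set.Ici (0 : ℝ)))
    (hφd : ∀ x t, 0 ≤ t → HasDerivWithinAt (φ x) (f (φ x t)) (Set.Ici 0) t)
    (hsemi : ∀ x t s, 0 ≤ t → 0 ≤ s → φ (φ x t) s = φ x (t + s))
    (D : Set (EuclideanSpace ℝ (Fin n))) (hD : IsCompact D)
    (h0D : (0 : EuclideanSpace ℝ (Fin n)) ∈ D)
    (V₁ V₂ : EuclideanSpace ℝ (Fin n) → ℝ)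
    (hV₁ : ContDiff ℝ 1 V₁) (hV₂ : ContDiff ℝ 1 V₂)
    (γ₁ γ₂ γ₃ η ε a : ℝ) (hγ : γ₁ < γ₂) (hγ₃ : 0 < γ₃)
    (hη : 0 < η) (hε : 0 < ε) (ha : 0 < a)
    (hthick : Metric.thickening ε {y ∈ D | V₁ y ≤ γ₁} ⊆
      Metric.ball (0 : EuclideanSpace ℝ (Fin n)) η)
    (hsub₁ : {y ∈ D | V₁ y ≤ γ₂} ⊆ interior D)
    (hdec₁ : ∀ x ∈ D, γ₁ < V₁ x → lieDeriv V₁ f x < -a)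
    (hV₂0 : V₂ 0 = 0)
    (hV₂pos : ∀ x ∈ D \ {0}, 0 < V₂ x)
    (hdec₂ : ∀ x ∈ D, lieDeriv V₂ f x ≤ 0)
    (hE : ∀ x : EuclideanSpace ℝ (Fin n),
      (∀ t, 0 ≤ t → φ x t ∈ {y ∈ D | lieDeriv V₂ f y = 0}) ↔ x = 0)
    (hball : Metric.ball (0 : EuclideanSpace ℝ (Fin n)) η ⊆ {y ∈ D | V₂ y ≤ γ₃})
    (hsub₂ : {y ∈ D | V₂ y ≤ γ₃} ⊆ interior D) :
    {y ∈ D | V₁ y ≤ γ₂} ∪ {y ∈ D | V₂ y ≤ γ₃} ⊆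
      {x | Tendsto (fun t => ‖φ x t‖) atTop (𝓝 0)} := by
  have key : ∀ z, z ∈ D → V₂ z ≤ γ₃ → Tendsto (fun t => ‖φ z t‖) atTop (𝓝 0) := by
    intro z hz hzV
    have h := lasalle hφ0 hφC hφd hsemi hD hV₂ hV₂0 hV₂pos hsub₂ hdec₂ hE hz hzV
    have hn := (continuous_norm.tendsto (0 : EuclideanSpace ℝ (Fin n))).comp h
    simpa [Function.comp_def] using hn
  intro y hy
  simp only [Set.mem_setOf_eq]
  rcases hy with hy | hy
  · obtain ⟨t₀, ht₀, hD', hγ₁'⟩ := hitting hφ0 hφd hD hV₁ ha hsub₁ hdec₁ hy.1 hy.2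
    have hball' : φ y t₀ ∈ Metric.ball (0 : EuclideanSpace ℝ (Fin n)) η :=
      hthick (self_subset_thickening hε _ ⟨hD', hγ₁'⟩)
    have hmem := hball hball'
    have hlim := key (φ y t₀) hmem.1 hmem.2
    have hshift : Tendsto (fun t : ℝ => ‖φ (φ y t₀) (t + -t₀)‖) atTop (𝓝 0) :=
      hlim.comp (tendsto_atTop_add_const_right atTop (-t₀) tendsto_id)
    refine Filter.Tendsto.congr' ?_ hshift
    filter_upwards [eventually_ge_atTop t₀] with t ht
    rw [hsemi y t₀ (t + -t₀) ht₀ (by linarith)]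
    have h2 : t₀ + (t + -t₀) = t := by ring
    rw [h2]
  · exact key y hy.1 hy.2
end

section
/- Let D ⊂ ℝⁿ be compact with 0 ∈ D, let V₂ : ℝⁿ → ℝ be continuously differentiable with V₂(0) = 0 and V₂(x) > 0 for all x ∈ D \ {0}, and suppose ∇V₂(x)ᵀ f(x) ≤ 0 for all x ∈ D, the only point x for which φ(x,t) ∈ {y ∈ D : ∇V₂(y)ᵀ f(y) = 0} for all t ≥ 0 is x = 0, and γ₃ > 0 is such that {y ∈ D : V₂(y) ≤ γ₃} is contained in the interior of D. Then {y ∈ D : V₂(y) ≤ γ₃} ⊆ ROA_f. -/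
open Filter Metric Set
open scoped Topology

/-- A sublevel set `{y ∈ D : V₂(y) ≤ γ₃}` of a Lyapunov function `V₂`, contained in the
interior of the compact set `D`, is contained in the region of attraction. -/
theorem lyapunov_sublevel_subset_ROA {n : ℕ}
    (f : EuclideanSpace ℝ (Fin n) → EuclideanSpace ℝ (Fin n))
    (hf : ContDiff ℝ 1 f) (hf0 : f 0 = 0)
    (φ : EuclideanSpace ℝ (Fin n) → ℝ → EuclideanSpace ℝ (Fin n))
    (hφ0 : ∀ x, φ x 0 = x)
    (hφC : ContDiffOn ℝ 1 (fun p : EuclideanSpace ℝ (Fin n) × ℝ => φ p.1 p.2)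
      (Set.univ ×ˢ Set.Ici (0 : ℝ)))
    (hφd : ∀ x t, 0 ≤ t → HasDerivWithinAt (φ x) (f (φ x t)) (Set.Ici 0) t)
    (hsemi : ∀ x t s, 0 ≤ t → 0 ≤ s → φ (φ x t) s = φ x (t + s))
    (D : Set (EuclideanSpace ℝ (Fin n))) (hD : IsCompact D)
    (h0D : (0 : EuclideanSpace ℝ (Fin n)) ∈ D)
    (V₂ : EuclideanSpace ℝ (Fin n) → ℝ)
    (hV₂ : ContDiff ℝ 1 V₂)
    (hV₂0 : V₂ 0 = 0)
    (hV₂pos : ∀ x ∈ D \ {0}, 0 < V₂ x)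
    (hdec₂ : ∀ x ∈ D, lieDeriv V₂ f x ≤ 0)
    (hE : ∀ x : EuclideanSpace ℝ (Fin n),
      (∀ t, 0 ≤ t → φ x t ∈ {y ∈ D | lieDeriv V₂ f y = 0}) ↔ x = 0)
    (γ₃ : ℝ) (hγ₃ : 0 < γ₃)
    (hsub : {y ∈ D | V₂ y ≤ γ₃} ⊆ interior D) :
    {y ∈ D | V₂ y ≤ γ₃} ⊆ {x | Tendsto (fun t => ‖φ x t‖) atTop (𝓝 0)} := by
  intro x hx
  obtain ⟨hxD, hxV⟩ := hx
  -- continuity of trajectories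
  have contφ : ∀ z : EuclideanSpace ℝ (Fin n), ContinuousOn (φ z) (Set.Ici 0) := by
    intro z
    have hc : ContinuousOn (fun s : ℝ => ((z, s) : EuclideanSpace ℝ (Fin n) × ℝ))
        (Set.Ici 0) := (continuous_const.prodMk continuous_id).continuousOn
    exact hφC.continuousOn.comp hc (fun s hs => ⟨Set.mem_univ z, hs⟩)
  have hVnonneg : ∀ y ∈ D, 0 ≤ V₂ y := by
    intro y hy
    by_cases h : y = 0
    · simp [h, hV₂0]
    · exact (hV₂pos y ⟨hy, h⟩).le
  -- chain rule
  have key : ∀ (z : EuclideanSpace ℝ (Fin n)) (s : ℝ), 0 ≤ s →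
      HasDerivWithinAt (fun u => V₂ (φ z u)) (lieDeriv V₂ f (φ z s)) (Set.Ici 0) s := by
    intro z s hs
    have h2 : HasFDerivAt V₂ (fderiv ℝ V₂ (φ z s)) (φ z s) :=
      (hV₂.differentiable one_ne_zero (φ z s)).hasFDerivAt
    have h := h2.comp_hasDerivWithinAt s (hφd z s hs)
    refine h.congr_deriv ?_
    rw [lieDeriv, gradient, InnerProductSpace.toDual_symm_apply]
  -- monotonicity while staying in D
  have anti : ∀ t : ℝ, 0 ≤ t → (∀ s ∈ Set.Icc (0:ℝ) t, φ x s ∈ D) →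
      AntitoneOn (fun s => V₂ (φ x s)) (Set.Icc 0 t) := by
    intro t ht hmem
    have hderiv : ∀ s ∈ Set.Ioo (0:ℝ) t,
        HasDerivAt (fun u => V₂ (φ x u)) (lieDeriv V₂ f (φ x s)) s := by
      intro s hs
      exact (key x s hs.1.le).hasDerivAt (Ici_mem_nhds hs.1)
    refine antitoneOn_of_deriv_nonpos (convex_Icc 0 t) ?_ ?_ ?_
    · exact hV₂.continuous.comp_continuousOn ((contφ x).mono Icc_subset_Ici_self)
    · rw [interior_Icc]
      exact fun s hs => ((hderiv s hs).differentiableAt).differentiableWithinAt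
    · rw [interior_Icc]
      intro s hs
      rw [(hderiv s hs).deriv]
      exact hdec₂ _ (hmem s ⟨hs.1.le, hs.2.le⟩)
  -- Step A: the trajectory stays in the sublevel set
  have stepA : ∀ t : ℝ, 0 ≤ t → φ x t ∈ D ∧ V₂ (φ x t) ≤ γ₃ := by
    by_contra hcon
    push_neg at hcon
    set B : Set ℝ := {t | 0 ≤ t ∧ ¬ (φ x t ∈ D ∧ V₂ (φ x t) ≤ γ₃)} with hB
    have hBne : B.Nonempty := by
      obtain ⟨t, ht, h⟩ := hcon
      exact ⟨t, ht, fun hc => absurd hc.2 (not_le.2 (h hc.1))⟩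
    have hBbd : BddBelow B := ⟨0, fun t ht => ht.1⟩
    set τ := sInf B with hτ
    have hτ0 : 0 ≤ τ := le_csInf hBne (fun t ht => ht.1)
    have hbefore : ∀ s : ℝ, 0 ≤ s → s < τ → φ x s ∈ D ∧ V₂ (φ x s) ≤ γ₃ := by
      intro s hs hsτ
      by_contra h
      exact absurd (csInf_le hBbd (show s ∈ B from ⟨hs, h⟩)) (not_le.2 hsτ)
    -- φ x τ ∈ D
    have hτD : φ x τ ∈ D := by
      rcases eq_or_lt_of_le hτ0 with h0 | h0
      · rw [← h0, hφ0]; exact hxD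
      · have hne : (𝓝[Set.Ioo 0 τ] τ).NeBot := right_nhdsWithin_Ioo_neBot h0
        have htend : Tendsto (φ x) (𝓝[Set.Ioo 0 τ] τ) (𝓝 (φ x τ)) :=
          (contφ x τ (le_of_lt h0)).mono (fun u (hu : u ∈ Set.Ioo 0 τ) => hu.1.le)
        refine hD.isClosed.mem_of_tendsto htend ?_
        filter_upwards [self_mem_nhdsWithin] with s hs
        exact (hbefore s hs.1.le hs.2).1
    have hmemτ : ∀ s ∈ Set.Icc (0:ℝ) τ, φ x s ∈ D := by
      intro s hs
      rcases eq_or_lt_of_le hs.2 with h | h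
      · rw [h]; exact hτD
      · exact (hbefore s hs.1 h).1
    have hτV : V₂ (φ x τ) ≤ γ₃ := by
      have := anti τ hτ0 hmemτ ⟨le_refl 0, hτ0⟩ ⟨hτ0, le_refl τ⟩ hτ0
      simp only [hφ0] at this
      exact this.trans hxV
    -- φ x τ is in interior D; extend a bit
    have hint : φ x τ ∈ interior D := hsub ⟨hτD, hτV⟩
    have hcw : ContinuousWithinAt (φ x) (Set.Ici 0) τ := contφ x τ hτ0
    have hnhd : (φ x) ⁻¹' (interior D) ∈ 𝓝[Set.Ici 0] τ :=
      hcw (isOpen_interior.mem_nhds hint)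
    rw [Metric.mem_nhdsWithin_iff] at hnhd
    obtain ⟨δ, hδ, hball⟩ := hnhd
    set δ' := δ / 2 with hδ'
    have hδ'pos : 0 < δ' := by positivity
    have hstep : ∀ s ∈ Set.Icc (0:ℝ) (τ + δ'), φ x s ∈ D := by
      intro s hs
      rcases le_or_gt s τ with h | h
      · exact hmemτ s ⟨hs.1, h⟩
      · have : s ∈ Metric.ball τ δ ∩ Set.Ici 0 := by
          constructor
          · rw [Metric.mem_ball, Real.dist_eq, abs_lt]
            constructor <;> [linarith [hs.2]; linarith [hs.2]]
          · exact hs.1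
        exact interior_subset (hball this)
    have hτδ : 0 ≤ τ + δ' := by linarith
    have hgood : ∀ s ∈ Set.Icc (0:ℝ) (τ + δ'), φ x s ∈ D ∧ V₂ (φ x s) ≤ γ₃ := by
      intro s hs
      refine ⟨hstep s hs, ?_⟩
      have := anti (τ + δ') hτδ hstep ⟨le_refl 0, hτδ⟩ hs hs.1
      simp only [hφ0] at this
      exact this.trans hxV
    have : τ + δ' ≤ τ := by
      rw [hτ]
      apply le_csInf hBne
      intro b hb
      by_contra hlt
      push_neg at hlt
      exact hb.2 (hgood b ⟨hb.1, hlt.le⟩)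
    linarith
  -- Step B: V₂ along the trajectory converges
  have hmono : AntitoneOn (fun s => V₂ (φ x s)) (Set.Ici 0) := by
    intro a ha b hb hab
    have := anti b hb (fun s hs => (stepA s hs.1).1) ⟨ha, hab⟩ ⟨hb, le_refl b⟩ hab
    exact this
  set g : ℝ → ℝ := fun t => V₂ (φ x (max t 0)) with hg
  have hganti : Antitone g := by
    intro a b hab
    exact hmono (le_max_right a 0) (le_max_right b 0) (max_le_max hab (le_refl 0))
  have hgbdd : BddBelow (Set.range g) := by
    refine ⟨0, ?_⟩
    rintro _ ⟨t, rfl⟩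
    exact hVnonneg _ (stepA (max t 0) (le_max_right t 0)).1
  set c := ⨅ t, g t with hc
  have hgc : Tendsto g atTop (𝓝 c) := tendsto_atTop_ciInf hganti hgbdd
  have hVc : Tendsto (fun t => V₂ (φ x t)) atTop (𝓝 c) := by
    refine hgc.congr' ?_
    filter_upwards [eventually_ge_atTop (0:ℝ)] with t ht
    simp [hg, max_eq_left ht]
  -- Step C: conclude by contradiction
  simp only [Set.mem_setOf_eq]
  by_contra hnot
  rw [Metric.tendsto_atTop] at hnot
  push_neg at hnot
  obtain ⟨ε, hε, hfreq⟩ := hnot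
  choose t ht hεt using fun k : ℕ => hfreq k
  have htnn : ∀ k : ℕ, (0:ℝ) ≤ t k := fun k => le_trans (Nat.cast_nonneg k) (ht k)
  have hmemD : ∀ k, φ x (t k) ∈ D := fun k => (stepA (t k) (htnn k)).1
  obtain ⟨y, hyD, ψ, hψ, hψt⟩ := hD.tendsto_subseq hmemD
  have hty : Tendsto (fun k => t (ψ k)) atTop atTop := by
    apply tendsto_atTop_mono (fun k => le_trans (Nat.cast_le.2 (hψ.id_le k)) (ht (ψ k)))
    exact tendsto_natCast_atTop_atTop
  -- norm of y is at least ε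
  have hynorm : ε ≤ ‖y‖ := by
    have h1 : Tendsto (fun k => ‖φ x (t (ψ k))‖) atTop (𝓝 ‖y‖) :=
      (continuous_norm.tendsto y).comp hψt
    refine ge_of_tendsto h1 ?_
    filter_upwards with k
    have := hεt (ψ k)
    rw [Real.dist_eq, sub_zero, abs_of_nonneg (norm_nonneg _)] at this
    exact this
  -- the limit point trajectory
  have hkey : ∀ s : ℝ, 0 ≤ s → φ y s ∈ D ∧ V₂ (φ y s) = c := by
    intro s hs
    have hcont : ContinuousWithinAt (fun p : EuclideanSpace ℝ (Fin n) × ℝ => φ p.1 p.2)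
        (Set.univ ×ˢ Set.Ici 0) (y, s) := hφC.continuousOn (y, s) ⟨Set.mem_univ y, hs⟩
    have hseq : Tendsto (fun k => ((φ x (t (ψ k)), s) : EuclideanSpace ℝ (Fin n) × ℝ))
        atTop (𝓝[Set.univ ×ˢ Set.Ici 0] (y, s)) := by
      rw [tendsto_nhdsWithin_iff]
      exact ⟨hψt.prodMk_nhds tendsto_const_nhds,
        Filter.Eventually.of_forall (fun k => ⟨Set.mem_univ _, hs⟩)⟩
    have h2 : Tendsto (fun k => φ (φ x (t (ψ k))) s) atTop (𝓝 (φ y s)) :=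
      hcont.tendsto.comp hseq
    have h3 : (fun k => φ (φ x (t (ψ k))) s) = fun k => φ x (t (ψ k) + s) := by
      funext k
      exact hsemi x (t (ψ k)) s (htnn (ψ k)) hs
    rw [h3] at h2
    have h4 : Tendsto (fun k => t (ψ k) + s) atTop atTop :=
      tendsto_atTop_add_const_right _ s hty
    constructor
    · refine hD.isClosed.mem_of_tendsto h2 ?_
      filter_upwards with k
      exact (stepA (t (ψ k) + s) (by linarith [htnn (ψ k)])).1
    · have h5 : Tendsto (fun k => V₂ (φ x (t (ψ k) + s))) atTop (𝓝 c) :=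
        hVc.comp h4
      have h6 : Tendsto (fun k => V₂ (φ x (t (ψ k) + s))) atTop (𝓝 (V₂ (φ y s))) :=
        (hV₂.continuous.tendsto _).comp h2
      exact tendsto_nhds_unique h6 h5
  -- derivative of constant is zero
  have hlie : ∀ s : ℝ, 0 ≤ s → lieDeriv V₂ f (φ y s) = 0 := by
    intro s hs
    have h1 : HasDerivWithinAt (fun u => V₂ (φ y u)) (lieDeriv V₂ f (φ y s)) (Set.Ici 0) s :=
      key y s hs
    have h2 : HasDerivWithinAt (fun u => V₂ (φ y u)) 0 (Set.Ici 0) s := by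
      refine (hasDerivWithinAt_const s (Set.Ici 0) c).congr ?_ ?_
      · intro u hu; exact (hkey u hu).2
      · exact (hkey s hs).2
    have hu : UniqueDiffWithinAt ℝ (Set.Ici (0:ℝ)) s := uniqueDiffOn_Ici 0 s hs
    rw [← h1.derivWithin hu, h2.derivWithin hu]
  have hy0 : y = 0 := (hE y).1 (fun s hs => ⟨(hkey s hs).1, hlie s hs⟩)
  rw [hy0] at hynorm
  simp at hynorm
  linarith
end
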